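/- Let s > 0, α ∈ (0, 1), q_α = Φ⁻¹((α + 1)/2), and fix r ∈ ℝ with |r| ≠ s·q_α. For ε ∈ [0, 1) define q(ε) as the α-quantile of |W_ε|, where W_ε has the mixture distribution (1 − ε)·N(0, s²) + ε·δ_r, i.e., q(ε) is the smallest q ≥ 0 with (1 − ε)(2Φ(q/s) − 1) + ε·1{|r| ≤ q} ≥ α. Then q is differentiable from the right at ε = 0 with q′(0) = s·(α − 1{|r| ≤ s·q_α}) / (2φ(q_α)). -/

import Mathlib

open MeasureTheory ProbabilityTheory Set Filter

lemma aux_pdf_cont : Continuous (gaussianPDFReal 0 1) := by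
  unfold gaussianPDFReal
  fun_prop

lemma aux_phi_eq (t : ℝ) :
    ((gaussianReal 0 1) (Set.Iic t)).toReal = ∫ x in Set.Iic t, gaussianPDFReal 0 1 x := by
  rw [gaussianReal_apply_eq_integral 0 one_ne_zero, ENNReal.toReal_ofReal]
  exact integral_nonneg fun x => gaussianPDFReal_nonneg _ _ _

lemma aux_sub (a b : ℝ) :
    (∫ x in Set.Iic b, gaussianPDFReal 0 1 x) - (∫ x in Set.Iic a, gaussianPDFReal 0 1 x)
      = ∫ x in a..b, gaussianPDFReal 0 1 x :=
  intervalIntegral.integral_Iic_sub_Iic ((integrable_gaussianPDFReal 0 1).integrableOn)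
    ((integrable_gaussianPDFReal 0 1).integrableOn)

lemma aux_mono : StrictMono (fun t => ∫ x in Set.Iic t, gaussianPDFReal 0 1 x) := by
  intro a b hab
  have h := intervalIntegral.intervalIntegral_pos_of_pos (f := gaussianPDFReal 0 1)
    ((integrable_gaussianPDFReal 0 1).intervalIntegrable)
    (fun x => gaussianPDFReal_pos _ _ _ one_ne_zero) hab
  have := aux_sub a b
  simp only [] at *; linarith

lemma aux_deriv (t : ℝ) :
    HasDerivAt (fun u => ∫ x in Set.Iic u, gaussianPDFReal 0 1 x) (gaussianPDFReal 0 1 t) t := by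
  have h1 : ∀ u : ℝ, (∫ x in Set.Iic u, gaussianPDFReal 0 1 x)
      = (∫ x in Set.Iic (0:ℝ), gaussianPDFReal 0 1 x) + ∫ x in (0:ℝ)..u, gaussianPDFReal 0 1 x := by
    intro u; rw [← aux_sub 0 u]; ring
  have h2 : HasDerivAt (fun u => (∫ x in Set.Iic (0:ℝ), gaussianPDFReal 0 1 x)
      + ∫ x in (0:ℝ)..u, gaussianPDFReal 0 1 x) (gaussianPDFReal 0 1 t) t := by
    refine (intervalIntegral.integral_hasDerivAt_right
      ((integrable_gaussianPDFReal 0 1).intervalIntegrable)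
      (aux_pdf_cont.stronglyMeasurableAtFilter _ _)
      aux_pdf_cont.continuousAt).const_add _
  exact h2.congr_of_eventuallyEq (Filter.Eventually.of_forall h1)

lemma aux_half : (∫ x in Set.Iic (0:ℝ), gaussianPDFReal 0 1 x) = 1/2 := by
  have heven : ∀ x : ℝ, gaussianPDFReal 0 1 (-x) = gaussianPDFReal 0 1 x := by
    intro x; unfold gaussianPDFReal; norm_num
  have h1 : (∫ x in Set.Iic (0:ℝ), gaussianPDFReal 0 1 x)
      = ∫ x in Set.Ioi (0:ℝ), gaussianPDFReal 0 1 x := by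
    have := integral_comp_neg_Iic (0:ℝ) (gaussianPDFReal 0 1)
    simp_rw [heven, neg_zero] at this
    exact this
  have h2 : (∫ x in Set.Iic (0:ℝ), gaussianPDFReal 0 1 x)
      + ∫ x in Set.Ioi (0:ℝ), gaussianPDFReal 0 1 x = 1 := by
    have := integral_add_compl (measurableSet_Iic (a := (0:ℝ)))
      (integrable_gaussianPDFReal 0 1)
    rw [Set.compl_Iic] at this
    rw [this, integral_gaussianPDFReal_eq_one 0 one_ne_zero]
  linarith

set_option maxHeartbeats 1000000 in
/-- derivative of the α-quantile of the folded contaminated normal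
distribution. With `q(ε)` the smallest `q ≥ 0` such that
`(1-ε)(2Φ(q/s) - 1) + ε·1{|r| ≤ q} ≥ α`, the map `q` is right differentiable at `0`
with derivative `s·(α - 1{|r| ≤ s·q_α})/(2φ(q_α))`. -/
theorem quantile_derivative_under_contamination
    (s : ℝ) (hs : 0 < s)
    (α : ℝ) (hα : α ∈ Set.Ioo (0 : ℝ) 1)
    (Phi : ℝ → ℝ) (hPhi : ∀ t : ℝ, Phi t = ((gaussianReal 0 1) (Set.Iic t)).toReal)
    (qα : ℝ) (hqα : Phi qα = (α + 1) / 2)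
    (r : ℝ) (hr : |r| ≠ s * qα)
    (q : ℝ → ℝ)
    (hq : ∀ ε : ℝ, q ε = sInf {t : ℝ | 0 ≤ t ∧
      α ≤ (1 - ε) * (2 * Phi (t / s) - 1) + ε * (if |r| ≤ t then 1 else 0)}) :
    HasDerivWithinAt q
      (s * (α - (if |r| ≤ s * qα then 1 else 0)) / (2 * gaussianPDFReal 0 1 qα))
      (Set.Ici 0) 0 := by
  obtain ⟨hα0, hα1⟩ := hα
  have hPhiEq : Phi = fun t => ∫ x in Set.Iic t, gaussianPDFReal 0 1 x :=
    funext fun t => by rw [hPhi t, aux_phi_eq]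
  have phi_mono : StrictMono Phi := hPhiEq ▸ aux_mono
  have phi_deriv : ∀ t, HasDerivAt Phi (gaussianPDFReal 0 1 t) t :=
    fun t => hPhiEq ▸ aux_deriv t
  have phi_cont : Continuous Phi :=
    continuous_iff_continuousAt.2 fun t => (phi_deriv t).continuousAt
  have phi_zero : Phi 0 = 1/2 := by rw [hPhiEq]; exact aux_half
  have hqα_pos : 0 < qα := by
    have h : Phi 0 < Phi qα := by rw [phi_zero, hqα]; linarith
    exact phi_mono.lt_iff_lt.mp h
  have hf_pos : 0 < gaussianPDFReal 0 1 qα := gaussianPDFReal_pos _ _ _ one_ne_zero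
  set c : ℝ := if |r| ≤ s * qα then 1 else 0 with hc
  have hαc : α ≠ c := by
    rw [hc]; split <;> intro h <;> simp_all <;> linarith
  -- δ0
  set δ0 : ℝ := min (qα/2) (abs (s*qα - |r|)/(2*s)) with hδ0
  have habs_pos : 0 < abs (s*qα - |r|) := by
    rw [abs_pos, sub_ne_zero]; exact fun h => hr h.symm
  have hδ0_pos : 0 < δ0 := lt_min (by linarith) (by positivity)
  have hδ0_le : δ0 ≤ qα/2 := min_le_left _ _
  have hδ0r : δ0 ≤ abs (s*qα - |r|)/(2*s) := min_le_right _ _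
  have hIr1 : |r| ≤ s*qα → |r| ≤ s*(qα - δ0) := by
    intro h
    have hlt : |r| < s*qα := lt_of_le_of_ne h hr
    have habs : abs (s*qα - |r|) = s*qα - |r| := abs_of_pos (by linarith)
    have : s * δ0 ≤ (s*qα - |r|)/2 := by
      calc s * δ0 ≤ s * (abs (s*qα - |r|)/(2*s)) := by nlinarith
        _ = (s*qα - |r|)/2 := by rw [habs]; field_simp
    nlinarith
  have hIr0 : ¬(|r| ≤ s*qα) → s*(qα + δ0) < |r| := by
    intro h
    push_neg at h
    have habs : abs (s*qα - |r|) = |r| - s*qα := by rw [abs_sub_comm]; exact abs_of_pos (by linarith)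
    have h2 : s * δ0 ≤ (|r| - s*qα)/2 := by
      calc s * δ0 ≤ s * (abs (s*qα - |r|)/(2*s)) := by nlinarith
        _ = (|r| - s*qα)/2 := by rw [habs]; field_simp
    nlinarith
  -- the perturbed level
  set H : ℝ → ℝ := fun ε => ((α - ε*c)/(1-ε) + 1)/2 with hH
  have hH0 : H 0 = Phi qα := by rw [hqα]; simp [hH]
  have hHcont : ContinuousAt H 0 := by
    apply ContinuousAt.div_const
    apply ContinuousAt.add _ continuousAt_const
    exact ContinuousAt.div (by fun_prop) (by fun_prop) (by norm_num)
  -- key pointwise lemma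
  have hkey : ∀ ε : ℝ, 0 ≤ ε → ε < 1 → Phi (qα - δ0) < H ε → H ε < Phi (qα + δ0) →
      Phi (q ε / s) = H ε ∧ s*(qα - δ0) ≤ q ε ∧ q ε ≤ s*(qα + δ0) := by
    intro ε hε0 hε1 hlo hhi
    have h1ε : (0:ℝ) < 1 - ε := by linarith
    obtain ⟨x, hxI, hPx⟩ : ∃ x ∈ Set.Icc (qα - δ0) (qα + δ0), Phi x = H ε := by
      have hsub : Set.Icc (Phi (qα - δ0)) (Phi (qα + δ0)) ⊆ Phi '' Set.Icc (qα - δ0) (qα + δ0) :=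
        intermediate_value_Icc (by linarith) phi_cont.continuousOn
      obtain ⟨x, hx, hPx⟩ := hsub ⟨hlo.le, hhi.le⟩
      exact ⟨x, hx, hPx⟩
    have hxpos : 0 < x := lt_of_lt_of_le (by linarith) hxI.1
    have hchi : (if |r| ≤ s*x then (1:ℝ) else 0) = c := by
      rw [hc]
      by_cases hcase : |r| ≤ s*qα
      · rw [if_pos hcase, if_pos]
        calc |r| ≤ s*(qα - δ0) := hIr1 hcase
          _ ≤ s*x := by nlinarith [hxI.1]
      · rw [if_neg hcase, if_neg]
        push_neg
        calc s*x ≤ s*(qα + δ0) := by nlinarith [hxI.2]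
          _ < |r| := hIr0 hcase
    have hval : (1-ε)*(2*Phi ((s*x)/s) - 1) + ε * (if |r| ≤ s*x then 1 else 0) = α := by
      rw [mul_div_cancel_left₀ _ hs.ne', hPx, hchi, hH]
      field_simp
      ring
    have hmem : s*x ∈ {t : ℝ | 0 ≤ t ∧
        α ≤ (1 - ε) * (2 * Phi (t / s) - 1) + ε * (if |r| ≤ t then 1 else 0)} :=
      ⟨by positivity, le_of_eq hval.symm⟩
    have hlb : ∀ t ∈ {t : ℝ | 0 ≤ t ∧
        α ≤ (1 - ε) * (2 * Phi (t / s) - 1) + ε * (if |r| ≤ t then 1 else 0)}, s*x ≤ t := by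
      rintro t ⟨ht0, htcond⟩
      by_contra hlt
      push_neg at hlt
      have hA : α ≤ (1-ε)*(2*Phi (t/s) - 1) + ε*c → s*x ≤ t := by
        intro hcond2
        have h2 : H ε ≤ Phi (t/s) := by
          rw [hH]
          have h3 : (α - ε*c)/(1-ε) ≤ 2*Phi (t/s) - 1 := by
            rw [div_le_iff₀ h1ε]; nlinarith
          linarith
        have h3 : x ≤ t/s := phi_mono.le_iff_le.mp (by rw [hPx]; exact h2)
        calc s*x ≤ s*(t/s) := by nlinarith
          _ = t := by field_simp
      by_cases hrt : |r| ≤ t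
      · rw [if_pos hrt] at htcond
        by_cases hcase : |r| ≤ s*qα
        · have hc1 : c = 1 := if_pos hcase
          exact absurd (hA (by rw [hc1]; linarith)) (not_le.2 hlt)
        · have h1 := hIr0 hcase
          have h2 : s*x ≤ s*(qα + δ0) := by nlinarith [hxI.2]
          linarith
      · rw [if_neg hrt] at htcond
        by_cases hcase : |r| ≤ s*qα
        · push_neg at hrt
          have hlt2 : |r| < s*qα := lt_of_le_of_ne hcase hr
          have h1 : t/s < qα := by rw [div_lt_iff₀ hs]; nlinarith
          have h2 : Phi (t/s) < (α+1)/2 := hqα ▸ phi_mono h1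
          have h3 : (1-ε)*(2*Phi (t/s) - 1) < α := by
            rcases le_or_gt 0 (2*Phi (t/s) - 1) with hp | hp
            · nlinarith
            · nlinarith
          linarith
        · have hc0 : c = 0 := if_neg hcase
          exact absurd (hA (by rw [hc0]; linarith)) (not_le.2 hlt)
    have hqε : q ε = s*x := by
      rw [hq ε]
      exact le_antisymm (csInf_le ⟨s*x, hlb⟩ hmem) (le_csInf ⟨s*x, hmem⟩ hlb)
    refine ⟨?_, ?_, ?_⟩
    · rw [hqε, mul_div_cancel_left₀ _ hs.ne', hPx]
    · rw [hqε]; nlinarith [hxI.1]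
    · rw [hqε]; nlinarith [hxI.2]
  -- eventual hypotheses
  have hmono_lo : Phi (qα - δ0) < Phi qα := phi_mono (by linarith)
  have hmono_hi : Phi qα < Phi (qα + δ0) := phi_mono (by linarith)
  have hev : ∀ᶠ ε in nhdsWithin 0 (Set.Ici 0),
      0 ≤ ε ∧ ε < 1 ∧ Phi (qα - δ0) < H ε ∧ H ε < Phi (qα + δ0) := by
    have e1 : ∀ᶠ ε in nhdsWithin 0 (Set.Ici 0), (0:ℝ) ≤ ε := eventually_mem_nhdsWithin
    have e2 : ∀ᶠ ε in nhdsWithin (0:ℝ) (Set.Ici 0), ε < 1 :=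
      eventually_nhdsWithin_of_eventually_nhds (eventually_lt_nhds (by norm_num : (0:ℝ) < 1))
    have e3 : ∀ᶠ ε in nhdsWithin (0:ℝ) (Set.Ici 0),
        H ε ∈ Set.Ioo (Phi (qα - δ0)) (Phi (qα + δ0)) := by
      apply eventually_nhdsWithin_of_eventually_nhds
      apply hHcont.eventually_mem
      rw [hH0]
      exact Ioo_mem_nhds hmono_lo hmono_hi
    filter_upwards [e1, e2, e3] with ε h1 h2 h3
    exact ⟨h1, h2, h3.1, h3.2⟩
  have hkey' : ∀ᶠ ε in nhdsWithin 0 (Set.Ici 0), Phi (q ε / s) = H ε := by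
    filter_upwards [hev] with ε ⟨h1, h2, h3, h4⟩
    exact (hkey ε h1 h2 h3 h4).1
  -- value at 0
  have hq0 : q 0 = s * qα := by
    have h := (hkey 0 le_rfl (by norm_num) (hH0 ▸ hmono_lo) (hH0 ▸ hmono_hi)).1
    rw [hH0] at h
    have := phi_mono.injective h
    field_simp at this
    linarith [this]
  -- convergence of q ε / s to qα
  have hu : Tendsto (fun ε => q ε / s) (nhdsWithin 0 (Set.Ici 0)) (nhds qα) := by
    rw [tendsto_order]
    constructor
    · intro b hb
      set b' := max b (qα - δ0) with hb'
      have hb'lt : b' < qα := max_lt hb (by linarith)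
      have hevH : ∀ᶠ ε in nhdsWithin (0:ℝ) (Set.Ici 0), Phi b' < H ε := by
        apply eventually_nhdsWithin_of_eventually_nhds
        have : Set.Ioi (Phi b') ∈ nhds (H 0) := by
          rw [hH0]; exact Ioi_mem_nhds (phi_mono hb'lt)
        exact hHcont.eventually_mem this
      filter_upwards [hevH, hkey'] with ε h1 h2
      have h3 : Phi b' < Phi (q ε / s) := by rw [h2]; exact h1
      exact lt_of_le_of_lt (le_max_left _ _) (phi_mono.lt_iff_lt.mp h3)
    · intro b hb
      set b' := min b (qα + δ0) with hb'
      have hb'gt : qα < b' := lt_min hb (by linarith)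
      have hevH : ∀ᶠ ε in nhdsWithin (0:ℝ) (Set.Ici 0), H ε < Phi b' := by
        apply eventually_nhdsWithin_of_eventually_nhds
        have : Set.Iio (Phi b') ∈ nhds (H 0) := by
          rw [hH0]; exact Iio_mem_nhds (phi_mono hb'gt)
        exact hHcont.eventually_mem this
      filter_upwards [hevH, hkey'] with ε h1 h2
      have h3 : Phi (q ε / s) < Phi b' := by rw [h2]; exact h1
      exact lt_of_lt_of_le (phi_mono.lt_iff_lt.mp h3) (min_le_left _ _)
  -- slope computation
  rw [hasDerivWithinAt_iff_tendsto_slope, Set.Ici_sdiff_left]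
  have hmono2 : nhdsWithin (0:ℝ) (Set.Ioi 0) ≤ nhdsWithin 0 (Set.Ici 0) :=
    nhdsWithin_mono _ Set.Ioi_subset_Ici_self
  -- eventual description on Ioi
  have hdesc : ∀ᶠ ε in nhdsWithin (0:ℝ) (Set.Ioi 0),
      Phi (q ε / s) - Phi qα = ε*(α - c)/(2*(1-ε)) ∧ 0 < ε ∧ ε < 1 := by
    filter_upwards [hkey'.filter_mono hmono2, hev.filter_mono hmono2,
      eventually_mem_nhdsWithin] with ε h1 ⟨_, h2, _, _⟩ h3
    refine ⟨?_, h3, h2⟩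
    rw [h1, hH, hqα]
    have h1ε : (1:ℝ) - ε ≠ 0 := by intro h; simp at h3 ⊢; nlinarith
    field_simp
    ring
  have hne : ∀ᶠ ε in nhdsWithin (0:ℝ) (Set.Ioi 0), q ε / s ≠ qα := by
    filter_upwards [hdesc] with ε ⟨h1, h2, h3⟩
    intro heq
    rw [heq, sub_self] at h1
    have h1ε : (0:ℝ) < 1 - ε := by linarith
    have : ε * (α - c) ≠ 0 := mul_ne_zero h2.ne' (sub_ne_zero.mpr hαc)
    have := h1.symm
    rw [div_eq_zero_iff] at this
    rcases this with h | h
    · exact absurd h ‹ε * (α - c) ≠ 0›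
    · linarith
  -- first factor tendsto
  have hslope : Tendsto (slope Phi qα) (nhdsWithin qα {qα}ᶜ) (nhds (gaussianPDFReal 0 1 qα)) :=
    hasDerivAt_iff_tendsto_slope.mp (phi_deriv qα)
  have hinv : Tendsto (fun y => (slope Phi qα y)⁻¹) (nhdsWithin qα {qα}ᶜ)
      (nhds (gaussianPDFReal 0 1 qα)⁻¹) := hslope.inv₀ hf_pos.ne'
  have hinv' : Tendsto (fun y => (y - qα)/(Phi y - Phi qα)) (nhdsWithin qα {qα}ᶜ)
      (nhds (gaussianPDFReal 0 1 qα)⁻¹) := by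
    refine hinv.congr fun y => ?_
    rw [slope_def_field, inv_div]
  -- compose with u
  have hu' : Tendsto (fun ε => q ε / s) (nhdsWithin (0:ℝ) (Set.Ioi 0)) (nhdsWithin qα {qα}ᶜ) := by
    rw [tendsto_nhdsWithin_iff]
    exact ⟨hu.mono_left hmono2, hne⟩
  have hfac1 : Tendsto (fun ε => (q ε / s - qα)/(Phi (q ε / s) - Phi qα))
      (nhdsWithin (0:ℝ) (Set.Ioi 0)) (nhds (gaussianPDFReal 0 1 qα)⁻¹) := hinv'.comp hu'
  have hfac2 : Tendsto (fun ε : ℝ => (α - c)/(2*(1-ε))) (nhdsWithin (0:ℝ) (Set.Ioi 0))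
      (nhds ((α - c)/2)) := by
    have h2 : Tendsto (fun ε : ℝ => (α - c)/(2*(1-ε))) (nhds 0) (nhds ((α - c)/(2*(1-0)))) := by
      apply Tendsto.div tendsto_const_nhds
      · exact ((continuous_const.mul (continuous_const.sub continuous_id)).tendsto 0)
      · norm_num
    norm_num at h2
    exact h2.mono_left nhdsWithin_le_nhds
  have hlim : Tendsto (fun ε => s * ((q ε / s - qα)/(Phi (q ε / s) - Phi qα)) * ((α - c)/(2*(1-ε))))
      (nhdsWithin (0:ℝ) (Set.Ioi 0))
      (nhds (s * (gaussianPDFReal 0 1 qα)⁻¹ * ((α - c)/2))) :=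
    (tendsto_const_nhds.mul hfac1).mul hfac2
  have hfinal : s * (gaussianPDFReal 0 1 qα)⁻¹ * ((α - c)/2)
      = s * (α - c) / (2 * gaussianPDFReal 0 1 qα) := by
    rw [eq_div_iff (by positivity : (2:ℝ) * gaussianPDFReal 0 1 qα ≠ 0)]
    field_simp
  rw [hfinal] at hlim
  refine hlim.congr' ?_
  filter_upwards [hdesc, eventually_mem_nhdsWithin] with ε ⟨h1, hε0, hε1⟩ hε0'
  have h1ε : (1:ℝ) - ε ≠ 0 := by intro h; nlinarith
  have hαc' : α - c ≠ 0 := sub_ne_zero.mpr hαc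
  have hεne : ε ≠ 0 := hε0.ne'
  rw [slope_def_field, hq0, sub_zero, h1]
  set u := q ε / s with hu_def
  have hq' : q ε = s * u := by rw [hu_def]; field_simp
  rw [hq']
  field_simp [hεne, hαc', h1ε]
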